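/- Let 1<p<∞ and α<p-1. For every absolutely continuous function u on [0,∞) with u(0)=0, one has ∫₀^∞ |u'(x)|^p x^α dx ≥ ((p-1-α)/p)^p ∫₀^∞ x^{α-p} |u(x)|^p dx. -/

import Mathlib

open MeasureTheory Set
open scoped ENNReal

/-- Classical weighted Hardy inequality on the half line: if `u` is absolutely
continuous on `[0,∞)` with `u 0 = 0` (encoded by `u x = ∫ t in 0..x, u' t` with
`u'` locally integrable), `1 < p` and `α < p - 1`, then
`∫₀^∞ |u'| ^ p x ^ α ≥ ((p-1-α)/p)^p ∫₀^∞ x^(α-p) |u|^p`. -/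
theorem stmt_0 (p α : ℝ) (hp : 1 < p) (hα : α < p - 1)
    (u u' : ℝ → ℝ) (hmeas : Measurable u')
    (hint : ∀ x ≥ (0:ℝ), IntervalIntegrable u' volume 0 x)
    (hrep : ∀ x ≥ (0:ℝ), u x = ∫ t in (0:ℝ)..x, u' t) :
    ENNReal.ofReal (((p - 1 - α) / p) ^ p) *
      ∫⁻ x in Ioi (0:ℝ), ENNReal.ofReal (x ^ (α - p) * |u x| ^ p) ≤
      ∫⁻ x in Ioi (0:ℝ), ENNReal.ofReal (|u' x| ^ p * x ^ α) := by
  have hp0 : (0:ℝ) < p := zero_lt_one.trans hp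
  set β : ℝ := (p - 1 - α) / p with hβdef
  have hβ : 0 < β := div_pos (by linarith) hp0
  have hβp : β * p = p - 1 - α := by
    rw [hβdef]; field_simp
  set q : ℝ := p / (p - 1) with hqdef
  have hpq : p.HolderConjugate q := Real.HolderConjugate.conjExponent hp
  set a : ℝ := (1 - β) * (p - 1) / p with hadef
  have hap : a * p = (1 - β) * (p - 1) := by
    rw [hadef]; field_simp
  have haq' : a * q = 1 - β := by
    rw [hadef, div_mul_eq_mul_div, mul_assoc, hpq.sub_one_mul_conj, mul_div_assoc,
      div_self hp0.ne', mul_one]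
  have haq : -a * q = β - 1 := by rw [neg_mul, haq']; ring
  set c : ℝ := α - p + β * (p - 1) with hcdef
  have hexp : β * (p - 1) = β * p - β := by ring
  have hc1 : c + 1 = -β := by rw [hcdef]; linarith [hβp, hexp]
  have hc : c < -1 := by linarith
  have hfinal : a * p + -β = α := by
    rw [hap]; nlinarith [hβp]
  -- the ENNReal-valued derivative and its Hölder companion
  set F : ℝ → ℝ≥0∞ := fun t => ENNReal.ofReal |u' t| with hFdef
  have hFmeas : Measurable F := (hmeas.abs).ennreal_ofReal
  set G : ℝ → ℝ≥0∞ := fun t => F t ^ p * ENNReal.ofReal (t ^ (a * p)) with hGdef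
  have hGmeas : Measurable G :=
    (hFmeas.pow measurable_const).mul ((measurable_id.pow measurable_const).ennreal_ofReal)
  have hGt : ∀ t, G t ≠ ⊤ := fun t =>
    ENNReal.mul_ne_top (ENNReal.rpow_ne_top_of_nonneg hp0.le ENNReal.ofReal_ne_top)
      ENNReal.ofReal_ne_top
  -- Step 1a : |u x| is bounded by the integral of |u'|
  have step1a : ∀ x : ℝ, 0 < x →
      ENNReal.ofReal |u x| ≤ ∫⁻ t in Ioc (0:ℝ) x, F t := by
    intro x hx
    rw [hrep x hx.le]
    have h1 : |∫ t in (0:ℝ)..x, u' t| ≤ ∫ t in (0:ℝ)..x, |u' t| :=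
      intervalIntegral.abs_integral_le_integral_abs hx.le
    have h2 : (∫ t in (0:ℝ)..x, |u' t|) = ∫ t in Ioc (0:ℝ) x, |u' t| :=
      intervalIntegral.integral_of_le hx.le
    have h3 : ENNReal.ofReal (∫ t in Ioc (0:ℝ) x, |u' t|)
        = ∫⁻ t in Ioc (0:ℝ) x, F t := by
      rw [ofReal_integral_eq_lintegral_ofReal ((hint x hx.le).1.abs)
        (ae_of_all _ fun t => abs_nonneg _)]
    rw [← h3, ← h2]
    exact ENNReal.ofReal_le_ofReal (h1.trans (le_of_eq rfl))
  -- Step 1b : Hölder inequality on (0, x]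
  have holder : ∀ x : ℝ, 0 < x →
      (∫⁻ t in Ioc (0:ℝ) x, F t) ^ p ≤
        (∫⁻ t in Ioc (0:ℝ) x, G t) *
        (∫⁻ t in Ioc (0:ℝ) x, ENNReal.ofReal (t ^ (-a * q))) ^ (p - 1) := by
    intro x hx
    have hstep : ∫⁻ t in Ioc (0:ℝ) x, F t =
        ∫⁻ t in Ioc (0:ℝ) x, (F t * ENNReal.ofReal (t ^ a)) * ENNReal.ofReal (t ^ (-a)) := by
      refine setLIntegral_congr_fun_ae measurableSet_Ioc (ae_of_all _ fun t ht => ?_)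
      rw [mul_assoc, ← ENNReal.ofReal_mul (Real.rpow_nonneg ht.1.le a),
        ← Real.rpow_add ht.1, add_neg_cancel, Real.rpow_zero, ENNReal.ofReal_one, mul_one]
    have hmeas1 : AEMeasurable (fun t => F t * ENNReal.ofReal (t ^ a))
        (volume.restrict (Ioc (0:ℝ) x)) :=
      (hFmeas.mul ((measurable_id.pow measurable_const).ennreal_ofReal)).aemeasurable
    have hmeas2 : AEMeasurable (fun t : ℝ => ENNReal.ofReal (t ^ (-a)))
        (volume.restrict (Ioc (0:ℝ) x)) :=
      ((measurable_id.pow measurable_const).ennreal_ofReal).aemeasurable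
    have holder' := ENNReal.lintegral_mul_le_Lp_mul_Lq (volume.restrict (Ioc (0:ℝ) x))
      hpq hmeas1 hmeas2
    rw [hstep]
    calc (∫⁻ t in Ioc (0:ℝ) x, (F t * ENNReal.ofReal (t ^ a)) * ENNReal.ofReal (t ^ (-a))) ^ p
        ≤ ((∫⁻ t in Ioc (0:ℝ) x, (F t * ENNReal.ofReal (t ^ a)) ^ p) ^ (1/p) *
          (∫⁻ t in Ioc (0:ℝ) x, ENNReal.ofReal (t ^ (-a)) ^ q) ^ (1/q)) ^ p :=
          ENNReal.rpow_le_rpow holder' hp0.le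
      _ = (∫⁻ t in Ioc (0:ℝ) x, (F t * ENNReal.ofReal (t ^ a)) ^ p) *
          (∫⁻ t in Ioc (0:ℝ) x, ENNReal.ofReal (t ^ (-a)) ^ q) ^ (p - 1) := by
          rw [ENNReal.mul_rpow_of_nonneg _ _ hp0.le, ← ENNReal.rpow_mul, ← ENNReal.rpow_mul,
            one_div_mul_cancel hp0.ne', ENNReal.rpow_one]
          congr 1
          rw [div_mul_eq_mul_div, one_mul, ← hpq.div_conj_eq_sub_one]
      _ = _ := by
          congr 1
          · refine setLIntegral_congr_fun_ae measurableSet_Ioc (ae_of_all _ fun t ht => ?_)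
            rw [ENNReal.mul_rpow_of_nonneg _ _ hp0.le,
              ENNReal.ofReal_rpow_of_nonneg (Real.rpow_nonneg ht.1.le a) hp0.le,
              ← Real.rpow_mul ht.1.le]
          · congr 1
            refine setLIntegral_congr_fun_ae measurableSet_Ioc (ae_of_all _ fun t ht => ?_)
            rw [ENNReal.ofReal_rpow_of_nonneg (Real.rpow_nonneg ht.1.le (-a)) hpq.symm.nonneg,
              ← Real.rpow_mul ht.1.le]
  -- Step 1c : computing the second Hölder factor
  have weight : ∀ x : ℝ, 0 < x →
      (∫⁻ t in Ioc (0:ℝ) x, ENNReal.ofReal (t ^ (-a * q))) = ENNReal.ofReal (x ^ β / β) := by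
    intro x hx
    have hr : (-1:ℝ) < -a * q := by rw [haq]; linarith
    rw [← ofReal_integral_eq_lintegral_ofReal
      ((intervalIntegral.intervalIntegrable_rpow' hr).1)
      (by filter_upwards [ae_restrict_mem measurableSet_Ioc] with t ht using
        Real.rpow_nonneg ht.1.le _)]
    rw [← intervalIntegral.integral_of_le hx.le, integral_rpow (Or.inl hr),
      Real.zero_rpow (by rw [haq]; intro h; nlinarith), sub_zero]
    congr 1
    rw [haq]
    norm_num
  -- pointwise bound for the left-hand integrand
  have pointwise : ∀ x : ℝ, 0 < x →
      ENNReal.ofReal (x ^ (α - p) * |u x| ^ p) ≤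
        ENNReal.ofReal (β ^ (1 - p)) *
          (ENNReal.ofReal (x ^ c) * ∫⁻ t in Ioc (0:ℝ) x, G t) := by
    intro x hx
    have key : ENNReal.ofReal (x ^ (α - p) * |u x| ^ p) ≤
        ENNReal.ofReal (x ^ (α - p)) *
          ((∫⁻ t in Ioc (0:ℝ) x, G t) * ENNReal.ofReal (x ^ β / β) ^ (p - 1)) := by
      rw [ENNReal.ofReal_mul (Real.rpow_nonneg hx.le _)]
      refine mul_le_mul_right ?_ _
      calc ENNReal.ofReal (|u x| ^ p)
          = ENNReal.ofReal |u x| ^ p :=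
            (ENNReal.ofReal_rpow_of_nonneg (abs_nonneg _) hp0.le).symm
        _ ≤ (∫⁻ t in Ioc (0:ℝ) x, F t) ^ p :=
            ENNReal.rpow_le_rpow (step1a x hx) hp0.le
        _ ≤ (∫⁻ t in Ioc (0:ℝ) x, G t) *
            (∫⁻ t in Ioc (0:ℝ) x, ENNReal.ofReal (t ^ (-a * q))) ^ (p - 1) := holder x hx
        _ = (∫⁻ t in Ioc (0:ℝ) x, G t) * ENNReal.ofReal (x ^ β / β) ^ (p - 1) := by
            rw [weight x hx]
    refine key.trans (le_of_eq ?_)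
    have hreal : x ^ (α - p) * (x ^ β / β) ^ (p - 1) = β ^ (1 - p) * x ^ c := by
      rw [Real.div_rpow (Real.rpow_nonneg hx.le β) hβ.le, ← Real.rpow_mul hx.le,
        div_eq_mul_inv, ← Real.rpow_neg hβ.le, neg_sub]
      rw [← mul_assoc, ← Real.rpow_add hx, mul_comm (x ^ (α - p + β * (p - 1)))]
    rw [ENNReal.ofReal_rpow_of_nonneg (div_nonneg (Real.rpow_nonneg hx.le β) hβ.le) (by linarith),
      mul_comm (∫⁻ t in Ioc (0:ℝ) x, G t), ← mul_assoc,
      ← ENNReal.ofReal_mul (Real.rpow_nonneg hx.le _), hreal,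
      ENNReal.ofReal_mul (Real.rpow_nonneg hβ.le _), mul_assoc]
  -- integrate the pointwise bound
  have step2 : (∫⁻ x in Ioi (0:ℝ), ENNReal.ofReal (x ^ (α - p) * |u x| ^ p)) ≤
      ENNReal.ofReal (β ^ (1 - p)) *
        ∫⁻ x in Ioi (0:ℝ), ENNReal.ofReal (x ^ c) * ∫⁻ t in Ioc (0:ℝ) x, G t := by
    rw [← lintegral_const_mul' _ _ ENNReal.ofReal_ne_top]
    refine lintegral_mono_ae ?_
    filter_upwards [ae_restrict_mem measurableSet_Ioi] with x hx
    exact pointwise x (mem_Ioi.mp hx)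
  -- Tonelli: swap the order of integration
  have swapstep : ∫⁻ x in Ioi (0:ℝ), ENNReal.ofReal (x ^ c) * ∫⁻ t in Ioc (0:ℝ) x, G t
      = ∫⁻ t in Ioi (0:ℝ), G t * ∫⁻ x in Ici t, ENNReal.ofReal (x ^ c) := by
    have hHmeas : Measurable (Function.uncurry fun x t : ℝ =>
        (Ioc (0:ℝ) x).indicator (fun s => ENNReal.ofReal (x ^ c) * G s) t) := by
      have : (Function.uncurry fun x t : ℝ =>
          (Ioc (0:ℝ) x).indicator (fun s => ENNReal.ofReal (x ^ c) * G s) t)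
          = fun z : ℝ × ℝ => Set.indicator {z : ℝ × ℝ | 0 < z.2 ∧ z.2 ≤ z.1}
            (fun z => ENNReal.ofReal (z.1 ^ c) * G z.2) z := by
        ext z
        simp [Function.uncurry, Set.indicator_apply, Set.mem_Ioc]
      rw [this]
      refine Measurable.indicator ?_ ?_
      · exact ((measurable_fst.pow measurable_const).ennreal_ofReal).mul
          (hGmeas.comp measurable_snd)
      · exact ((measurableSet_lt measurable_const measurable_snd).inter
          (measurableSet_le measurable_snd measurable_fst))
    have swap := lintegral_lintegral_swap (μ := volume.restrict (Ioi (0:ℝ)))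
        (ν := volume.restrict (Ioi (0:ℝ))) hHmeas.aemeasurable
    calc ∫⁻ x in Ioi (0:ℝ), ENNReal.ofReal (x ^ c) * ∫⁻ t in Ioc (0:ℝ) x, G t
        = ∫⁻ x in Ioi (0:ℝ), ∫⁻ t in Ioi (0:ℝ),
            (Ioc (0:ℝ) x).indicator (fun s => ENNReal.ofReal (x ^ c) * G s) t := by
          refine lintegral_congr fun x => ?_
          rw [lintegral_indicator measurableSet_Ioc, Measure.restrict_restrict measurableSet_Ioc,
            Set.inter_eq_left.mpr Ioc_subset_Ioi_self,
            lintegral_const_mul' _ _ ENNReal.ofReal_ne_top]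
      _ = ∫⁻ t in Ioi (0:ℝ), ∫⁻ x in Ioi (0:ℝ),
            (Ioc (0:ℝ) x).indicator (fun s => ENNReal.ofReal (x ^ c) * G s) t := swap
      _ = ∫⁻ t in Ioi (0:ℝ), G t * ∫⁻ x in Ici t, ENNReal.ofReal (x ^ c) := by
          refine setLIntegral_congr_fun_ae measurableSet_Ioi (ae_of_all _ fun t ht => ?_)
          have hind : ∀ x : ℝ, (Ioc (0:ℝ) x).indicator (fun s => ENNReal.ofReal (x ^ c) * G s) t
              = (Ici t).indicator (fun x => ENNReal.ofReal (x ^ c) * G t) x := by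
            intro x
            simp only [Set.indicator_apply, Set.mem_Ioc, Set.mem_Ici]
            by_cases h : t ≤ x
            · simp [h, mem_Ioi.mp ht]
            · simp [h]
          simp_rw [hind]
          have hsub : Ici t ∩ Ioi (0:ℝ) = Ici t :=
            Set.inter_eq_left.mpr fun x hx => lt_of_lt_of_le (mem_Ioi.mp ht) hx
          rw [lintegral_indicator measurableSet_Ici, Measure.restrict_restrict measurableSet_Ici,
            hsub, lintegral_mul_const' _ _ (hGt t), mul_comm]
  -- computing the inner improper integral
  have inner : ∀ t : ℝ, 0 < t →
      (∫⁻ x in Ici t, ENNReal.ofReal (x ^ c)) = ENNReal.ofReal (t ^ (-β) / β) := by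
    intro t ht
    rw [← Measure.restrict_congr_set Ioi_ae_eq_Ici, ← ofReal_integral_eq_lintegral_ofReal
      (integrableOn_Ioi_rpow_of_lt hc ht)
      (by filter_upwards [ae_restrict_mem measurableSet_Ioi] with x hx using
        Real.rpow_nonneg (le_trans ht.le hx.le) c)]
    rw [integral_Ioi_rpow_of_lt hc ht]
    congr 1
    rw [hc1, neg_div_neg_eq]
  -- identify the right-hand side
  have rhs_eq : ∫⁻ t in Ioi (0:ℝ), G t * ∫⁻ x in Ici t, ENNReal.ofReal (x ^ c)
      = ENNReal.ofReal β⁻¹ * ∫⁻ t in Ioi (0:ℝ), ENNReal.ofReal (|u' t| ^ p * t ^ α) := by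
    rw [← lintegral_const_mul' _ _ ENNReal.ofReal_ne_top]
    refine setLIntegral_congr_fun_ae measurableSet_Ioi (ae_of_all _ fun t ht => ?_)
    have ht0 : (0:ℝ) < t := mem_Ioi.mp ht
    rw [inner t ht0, hGdef]
    simp only
    rw [ENNReal.ofReal_rpow_of_nonneg (abs_nonneg _) hp0.le,
      ← ENNReal.ofReal_mul (by positivity),
      ← ENNReal.ofReal_mul (by positivity),
      ← ENNReal.ofReal_mul (by positivity)]
    congr 1
    rw [mul_assoc, div_eq_mul_inv, ← mul_assoc (t ^ (a * p)), ← Real.rpow_add ht0, hfinal]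
    ring
  -- put everything together
  calc ENNReal.ofReal (β ^ p) *
        ∫⁻ x in Ioi (0:ℝ), ENNReal.ofReal (x ^ (α - p) * |u x| ^ p)
      ≤ ENNReal.ofReal (β ^ p) * (ENNReal.ofReal (β ^ (1 - p)) *
          (ENNReal.ofReal β⁻¹ * ∫⁻ x in Ioi (0:ℝ), ENNReal.ofReal (|u' x| ^ p * x ^ α))) := by
        refine mul_le_mul_right ?_ _
        refine step2.trans (le_of_eq ?_)
        rw [swapstep, rhs_eq]
    _ = ∫⁻ x in Ioi (0:ℝ), ENNReal.ofReal (|u' x| ^ p * x ^ α) := by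
        rw [← mul_assoc, ← mul_assoc, ← ENNReal.ofReal_mul (Real.rpow_nonneg hβ.le _),
          ← Real.rpow_add hβ, ← ENNReal.ofReal_mul (Real.rpow_nonneg hβ.le _)]
        have : p + (1 - p) = 1 := by ring
        rw [this, Real.rpow_one, mul_inv_cancel₀ hβ.ne', ENNReal.ofReal_one, one_mul]
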